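/- For every integer k ≥ 3, every finite K_k-minor-free simple graph G admits a linear order on its vertices such that the resulting ordered graph belongs to T_{k−2}^{(k−2)}. -/

import Mathlib

/-- A layering of a simple graph: adjacent vertices differ by at most 1. -/
def IsLayering {V : Type*} (G : SimpleGraph V) (lam : V → ℤ) : Prop :=
  ∀ ⦃u v : V⦄, G.Adj u v → |lam u - lam v| ≤ 1

/-- The spanning subgraph of `G` keeping only the edges with both ends in `U`.
Reachability and distances between vertices of `U` in this graph coincide with those
in the induced subgraph `G[U]`. -/
def restrictSet {V : Type*} (G : SimpleGraph V) (U : Set V) : SimpleGraph V where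
  Adj u v := G.Adj u v ∧ u ∈ U ∧ v ∈ U
  symm := ⟨fun _ _ ⟨h, hu, hv⟩ => ⟨h.symm, hv, hu⟩⟩
  loopless := ⟨fun u ⟨h, _, _⟩ => G.ne_of_adj h rfl⟩

/-- An ordered graph: a finite simple graph with a linear order on its vertices. -/
structure OrderedGraph : Type 1 where
  V : Type
  [fin : Fintype V]
  [ord : LinearOrder V]
  graph : SimpleGraph V

attribute [instance] OrderedGraph.fin OrderedGraph.ord

/-- A graph with an ordered vertex set is chordal (as an ordered graph) if for every
vertex `v` the neighbors of `v` smaller than `v` induce a clique. -/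
def ChordalOrdered {V : Type*} [LinearOrder V] (G : SimpleGraph V) : Prop :=
  ∀ ⦃v u w : V⦄, G.Adj v u → G.Adj v w → u < v → w < v → u ≠ w → G.Adj u w

/-- The class `T_d` of chordal ordered graphs with all left-degrees at most `d`. -/
def Tclass (d : ℕ) : Set OrderedGraph :=
  {O | ChordalOrdered O.graph ∧ ∀ v : O.V, ({u | O.graph.Adj v u ∧ u < v}).ncard ≤ d}

/-- The quotient graph `G/𝒫` of an ordered graph by a partition `P : Fin m → Set O.V`:
vertex `i` is adjacent to vertex `j` iff `i ≠ j` and some `u ∈ P i`, `v ∈ P j` are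
adjacent in `G`. -/
def quotGraph (O : OrderedGraph) (m : ℕ) (P : Fin m → Set O.V) : SimpleGraph (Fin m) where
  Adj i j := i ≠ j ∧ ∃ u ∈ P i, ∃ v ∈ P j, O.graph.Adj u v
  symm := ⟨by
    rintro i j ⟨hij, u, hu, v, hv, huv⟩
    exact ⟨hij.symm, v, hv, u, hu, huv.symm⟩⟩
  loopless := ⟨by rintro i ⟨hii, -⟩; exact hii rfl⟩

/-- The quotient ordered graph `G/𝒫`, on `Fin m` with its natural order. -/
def OrderedGraph.quot (O : OrderedGraph) (m : ℕ) (P : Fin m → Set O.V) : OrderedGraph where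
  V := Fin m
  graph := quotGraph O m P

/-- The class `C^(d)`: ordered graphs admitting a width-`d` geodesic partition
`P₁, …, P_m` (each `G[P i]` has a layering which is geodesic with respect to
`G[P i ∪ ⋯ ∪ P m]` and has width at most `d`) whose quotient belongs to `C`. -/
def Cpow (C : Set OrderedGraph) (d : ℕ) : Set OrderedGraph :=
  {O | ∃ (m : ℕ) (P : Fin m → Set O.V),
    (∀ i, (P i).Nonempty) ∧
    (∀ i j, i ≠ j → Disjoint (P i) (P j)) ∧
    (⋃ i, P i) = Set.univ ∧
    (∀ i j : Fin m, i < j → ∀ u ∈ P i, ∀ v ∈ P j, u < v) ∧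
    (∀ i : Fin m, ∃ lam : O.V → ℤ,
      (∀ x ∈ P i, ∀ y ∈ P i, O.graph.Adj x y → |lam x - lam y| ≤ 1) ∧
      (∀ x ∈ P i, ∀ y ∈ P i,
        (restrictSet O.graph (⋃ j ∈ Set.Ici i, P j)).Reachable x y →
          |lam x - lam y| ≤ ((restrictSet O.graph (⋃ j ∈ Set.Ici i, P j)).dist x y : ℤ)) ∧
      (∀ z : ℤ, ({v | v ∈ P i ∧ lam v = z}).ncard ≤ d)) ∧
    O.quot m P ∈ C}

/-- `G` has a `K_k`-minor: there are pairwise disjoint nonempty vertex sets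
`B 0, …, B (k-1)`, each inducing a connected subgraph, pairwise joined by an edge. -/
def HasCliqueMinor {V : Type*} (G : SimpleGraph V) (k : ℕ) : Prop :=
  ∃ B : Fin k → Set V,
    (∀ i, (B i).Nonempty) ∧
    (∀ i j, i ≠ j → Disjoint (B i) (B j)) ∧
    (∀ i, ∀ x ∈ B i, ∀ y ∈ B i, (restrictSet G (B i)).Reachable x y) ∧
    (∀ i j, i ≠ j → ∃ u ∈ B i, ∃ v ∈ B j, G.Adj u v)

namespace Stmt8
open SimpleGraph

variable {V : Type*} {G : SimpleGraph V} {S S' U U' : Set V} {c r u v x y : V}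

def AdjS (G : SimpleGraph V) (A B : Set V) : Prop := ∃ u ∈ A, ∃ v ∈ B, G.Adj u v

lemma AdjS.symm {A B : Set V} (h : AdjS G A B) : AdjS G B A := by
  obtain ⟨u, hu, v, hv, h⟩ := h; exact ⟨v, hv, u, hu, h.symm⟩

lemma AdjS.mono {A B B' : Set V} (h : AdjS G A B) (hB : B ⊆ B') : AdjS G A B' := by
  obtain ⟨u, hu, v, hv, h⟩ := h; exact ⟨u, hu, v, hB hv, h⟩

def ConnIn (G : SimpleGraph V) (S : Set V) : Prop :=
  ∀ x ∈ S, ∀ y ∈ S, (restrictSet G S).Reachable x y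

def Komp (G : SimpleGraph V) (S : Set V) (c : V) : Set V :=
  {y | (restrictSet G S).Reachable c y}

lemma restrict_le (h : U ⊆ U') : restrictSet G U ≤ restrictSet G U' :=
  fun _u _v ⟨h1, h2, h3⟩ => ⟨h1, h h2, h h3⟩

lemma mem_of_walk : ∀ {x y : V}, (restrictSet G S).Walk x y → x ∈ S → y ∈ S := by
  intro x y w
  induction w with
  | nil => exact id
  | cons h _ ih => exact fun _ => ih h.2.2

lemma mem_of_reach (h : (restrictSet G S).Reachable x y) (hx : x ∈ S) : y ∈ S := by
  obtain ⟨w⟩ := h; exact mem_of_walk w hx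

lemma self_mem_komp : c ∈ Komp G S c := Reachable.refl c

lemma komp_subset (hc : c ∈ S) : Komp G S c ⊆ S := fun _ hy => mem_of_reach hy hc

lemma komp_closed (hc : c ∈ S) (hu : u ∈ Komp G S c) (hv : v ∈ S) (h : G.Adj u v) :
    v ∈ Komp G S c :=
  Reachable.trans hu (SimpleGraph.Adj.reachable ⟨h, komp_subset hc hu, hv⟩)

lemma walk_reach (hc : c ∈ S) (hsub : Komp G S c ⊆ S') :
    ∀ {x y : V}, (restrictSet G S).Walk x y → x ∈ Komp G S c →
      ((restrictSet G S').Reachable x y ∧ y ∈ Komp G S c) := by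
  intro x y w
  induction w with
  | nil => exact fun hx => ⟨Reachable.refl _, hx⟩
  | @cons a b d h p ih =>
      intro hx
      have hb : b ∈ Komp G S c := komp_closed hc hx h.2.2 h.1
      obtain ⟨hr, hy⟩ := ih hb
      exact ⟨Reachable.trans (SimpleGraph.Adj.reachable ⟨h.1, hsub hx, hsub hb⟩) hr, hy⟩

lemma komp_reach_base (hc : c ∈ S) (hy : y ∈ Komp G S c) :
    (restrictSet G (Komp G S c)).Reachable c y := by
  obtain ⟨w⟩ := hy
  exact (walk_reach hc (Set.Subset.refl _) w self_mem_komp).1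

lemma komp_conn (hc : c ∈ S) : ConnIn G (Komp G S c) := by
  intro a ha b hb
  exact (komp_reach_base hc ha).symm.trans (komp_reach_base hc hb)

lemma komp_shrink (hc : c ∈ S) (hsub : Komp G S c ⊆ S') : Komp G S c ⊆ Komp G S' c := by
  intro y hy
  obtain ⟨w⟩ := hy
  exact (walk_reach hc hsub w self_mem_komp).1

lemma komp_mono (h : S ⊆ S') : Komp G S c ⊆ Komp G S' c :=
  fun _ hy => hy.mono (restrict_le h)

lemma lipschitz_walk {H : SimpleGraph V} {lam : V → ℤ}
    (hl : ∀ u v, H.Adj u v → |lam u - lam v| ≤ 1) :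
    ∀ {x y : V}, (w : H.Walk x y) → |lam x - lam y| ≤ (w.length : ℤ) := by
  intro x y w
  induction w with
  | nil => simp
  | @cons a b d h p ih =>
      have h1 := hl _ _ h
      have h2 := abs_sub_le (lam a) (lam b) (lam d)
      simp only [Walk.length_cons]
      push_cast
      omega

lemma lipschitz_dist {H : SimpleGraph V} {lam : V → ℤ}
    (hl : ∀ u v, H.Adj u v → |lam u - lam v| ≤ 1) (hxy : H.Reachable x y) :
    |lam x - lam y| ≤ (H.dist x y : ℤ) := by
  obtain ⟨w, hw⟩ := hxy.exists_walk_length_eq_dist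
  simpa [hw] using lipschitz_walk hl w

lemma dist_add_adj {H : SimpleGraph V} (hr : H.Reachable r u) (h : H.Adj u v) :
    H.dist r v ≤ H.dist r u + 1 := by
  obtain ⟨p, hp⟩ := hr.exists_walk_length_eq_dist
  have := SimpleGraph.dist_le (p.concat h)
  simpa [SimpleGraph.Walk.length_concat, hp] using this

lemma exists_parent {H : SimpleGraph V} (hr : H.Reachable r v) (hd : H.dist r v ≠ 0) :
    ∃ u, H.Adj u v ∧ H.dist r u + 1 = H.dist r v := by
  obtain ⟨p, hp⟩ := hr.exists_walk_length_eq_dist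
  rcases hq : p.reverse with _ | ⟨h, q'⟩
  · exact absurd (SimpleGraph.dist_self ..) hd
  · rename_i b
    have hlen := congrArg SimpleGraph.Walk.length hq
    rw [SimpleGraph.Walk.length_reverse, hp] at hlen
    simp only [SimpleGraph.Walk.length_cons] at hlen
    have h1 : H.dist r b ≤ q'.length := by
      have := SimpleGraph.dist_le q'.reverse
      simpa using this
    have h2 : H.dist r v ≤ H.dist r b + 1 := dist_add_adj ⟨q'.reverse⟩ h.symm
    exact ⟨b, h.symm, by omega⟩


open Classical in
noncomputable def par (H : SimpleGraph V) (r v : V) : V :=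
  if h : ∃ u, H.Adj u v ∧ H.dist r u + 1 = H.dist r v then h.choose else v

lemma par_spec {H : SimpleGraph V} {r v : V} (hr : H.Reachable r v) (hd : H.dist r v ≠ 0) :
    H.Adj (par H r v) v ∧ H.dist r (par H r v) + 1 = H.dist r v := by
  have h := exists_parent hr hd
  classical
  rw [par, dif_pos h]
  exact h.choose_spec

lemma par_of_dist_zero {H : SimpleGraph V} {r v : V} (hd : H.dist r v = 0) : par H r v = v := by
  rw [par, dif_neg]
  rintro ⟨u, _, hu⟩
  omega

def pSet (H : SimpleGraph V) (r x : V) : Set V := {y | ∃ j, y = (par H r)^[j] x}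

lemma mem_pSet_iter {H : SimpleGraph V} (j : ℕ) : (par H r)^[j] x ∈ pSet H r x := ⟨j, rfl⟩

lemma self_mem_pSet {H : SimpleGraph V} : x ∈ pSet H r x := ⟨0, rfl⟩

lemma iter_spec {H : SimpleGraph V} (hr : H.Reachable r x) :
    ∀ j, H.Reachable r ((par H r)^[j] x) ∧
      H.dist r ((par H r)^[j] x) = H.dist r x - j := by
  intro j
  induction j with
  | zero => exact ⟨hr, by simp⟩
  | succ j ih =>
      obtain ⟨ihr, ihd⟩ := ih
      rw [Function.iterate_succ_apply']
      by_cases h0 : H.dist r ((par H r)^[j] x) = 0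
      · rw [par_of_dist_zero h0]
        exact ⟨ihr, by omega⟩
      · obtain ⟨hadj, hdd⟩ := par_spec ihr h0
        refine ⟨ihr.trans hadj.reachable.symm, by omega⟩

lemma iter_root {H : SimpleGraph V} (hr : H.Reachable r x) :
    (par H r)^[H.dist r x] x = r := by
  obtain ⟨hre, hd⟩ := iter_spec hr (H.dist r x)
  have : H.dist r ((par H r)^[H.dist r x] x) = 0 := by omega
  exact (hre.dist_eq_zero_iff.mp this).symm

lemma pSet_canonical {H : SimpleGraph V} (hr : H.Reachable r x) {y : V} (hy : y ∈ pSet H r x) :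
    ∃ j, j ≤ H.dist r x ∧ y = (par H r)^[j] x ∧ H.dist r y = H.dist r x - j := by
  obtain ⟨j, rfl⟩ := hy
  by_cases hj : j ≤ H.dist r x
  · exact ⟨j, hj, rfl, (iter_spec hr j).2⟩
  · have hroot := iter_root hr
    have hbig : ∀ m, (par H r)^[H.dist r x + m] x = r := by
      intro m
      induction m with
      | zero => simpa using hroot
      | succ m ihm =>
          rw [← Nat.add_assoc, Function.iterate_succ_apply', ihm]
          apply par_of_dist_zero
          simp [SimpleGraph.dist_self]
    have hjx : (par H r)^[j] x = (par H r)^[H.dist r x] x := by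
      have hj' : j = H.dist r x + (j - H.dist r x) := by omega
      rw [hj', hbig, hroot]
    exact ⟨H.dist r x, le_refl _, hjx, by rw [hjx]; exact (iter_spec hr (H.dist r x)).2⟩

lemma pSet_reach_root {H : SimpleGraph V} (hHG : ∀ u v, H.Adj u v → G.Adj u v)
    {T : Set V} (hT : pSet H r x ⊆ T) (hr : H.Reachable r x) :
    ∀ j, (restrictSet G T).Reachable ((par H r)^[j] x) r := by
  -- induction on the distance of the iterate
  suffices h : ∀ n j, H.dist r ((par H r)^[j] x) ≤ n → (restrictSet G T).Reachable ((par H r)^[j] x) r by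
    intro j
    exact h (H.dist r ((par H r)^[j] x)) j (le_refl _)
  intro n
  induction n with
  | zero =>
      intro j hj
      have h0 : H.dist r ((par H r)^[j] x) = 0 := by omega
      have := ((iter_spec hr j).1.dist_eq_zero_iff).mp h0
      rw [← this]
  | succ n ihn =>
      intro j hj
      by_cases h0 : H.dist r ((par H r)^[j] x) = 0
      · have := ((iter_spec hr j).1.dist_eq_zero_iff).mp h0
        rw [← this]
      · obtain ⟨hadj, hdd⟩ := par_spec (iter_spec hr j).1 h0
        have hnext : (restrictSet G T).Reachable ((par H r)^[j+1] x) r := by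
          apply ihn
          rw [Function.iterate_succ_apply']
          omega
        have hstep : (restrictSet G T).Adj ((par H r)^[j] x) ((par H r)^[j+1] x) := by
          have hm : (par H r)^[j+1] x = par H r ((par H r)^[j] x) :=
            Function.iterate_succ_apply' _ _ _
          rw [hm]
          exact ⟨(hHG _ _ hadj).symm, hT (mem_pSet_iter j),
            by rw [← hm]; exact hT (mem_pSet_iter (j+1))⟩
        exact hstep.reachable.trans hnext


lemma build_minor {G : SimpleGraph V} {t : ℕ} (ht : 3 ≤ t)
    {F : Set ℕ} {L : ℕ → Set V} {Cs : Set V}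
    (hFfin : F.Finite) (hcard : F.ncard = t - 1)
    (hne : ∀ j ∈ F, (L j).Nonempty) (hCne : Cs.Nonempty)
    (hdis : ∀ i ∈ F, ∀ j ∈ F, i ≠ j → Disjoint (L i) (L j))
    (hdisC : ∀ j ∈ F, Disjoint (L j) Cs)
    (hconn : ∀ j ∈ F, ConnIn G (L j)) (hconnC : ConnIn G Cs)
    (hadj : ∀ i ∈ F, ∀ j ∈ F, i ≠ j → AdjS G (L i) (L j))
    (hadjC : ∀ j ∈ F, AdjS G (L j) Cs) :
    HasCliqueMinor G t := by
  classical
  have hcc : hFfin.toFinset.card = t - 1 := by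
    rw [← Set.ncard_eq_toFinset_card _ hFfin, hcard]
  set e := hFfin.toFinset.equivFin with he
  -- index function
  have hlt : ∀ i : Fin t, (i : ℕ) < t - 1 → (i : ℕ) < hFfin.toFinset.card := by
    intro i h; omega
  let idx : ∀ i : Fin t, (i : ℕ) < t - 1 → ℕ := fun i h => (e.symm ⟨(i : ℕ), hlt i h⟩ : ℕ)
  have hidxF : ∀ i h, idx i h ∈ F := by
    intro i h
    exact hFfin.mem_toFinset.mp (e.symm ⟨(i : ℕ), hlt i h⟩).2
  have hidxinj : ∀ i h i' h', i ≠ i' → idx i h ≠ idx i' h' := by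
    intro i h i' h' hne' heq
    apply hne'
    have h1 : (e.symm ⟨(i : ℕ), hlt i h⟩) = (e.symm ⟨(i' : ℕ), hlt i' h'⟩) := Subtype.ext heq
    have h2 := e.symm.injective h1
    exact Fin.ext (by simpa using h2)
  let B : Fin t → Set V := fun i => if h : (i : ℕ) < t - 1 then L (idx i h) else Cs
  have hBval : ∀ i h, B i = L (idx i h) := fun i h => dif_pos h
  have hBlast : ∀ i : Fin t, ¬ (i : ℕ) < t - 1 → B i = Cs := fun i h => dif_neg h
  have hlast_eq : ∀ i j : Fin t, ¬ (i : ℕ) < t - 1 → ¬ (j : ℕ) < t - 1 → i = j := by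
    intro i j hi hj
    have := i.isLt; have := j.isLt
    apply Fin.ext; omega
  refine ⟨B, ?_, ?_, ?_, ?_⟩
  · intro i
    by_cases h : (i : ℕ) < t - 1
    · rw [hBval i h]; exact hne _ (hidxF i h)
    · rw [hBlast i h]; exact hCne
  · intro i j hij
    by_cases h : (i : ℕ) < t - 1 <;> by_cases h' : (j : ℕ) < t - 1
    · rw [hBval i h, hBval j h']
      exact hdis _ (hidxF i h) _ (hidxF j h') (hidxinj i h j h' hij)
    · rw [hBval i h, hBlast j h']; exact hdisC _ (hidxF i h)
    · rw [hBlast i h, hBval j h']; exact (hdisC _ (hidxF j h')).symm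
    · exact absurd (hlast_eq i j h h') hij
  · intro i
    by_cases h : (i : ℕ) < t - 1
    · rw [hBval i h]; exact hconn _ (hidxF i h)
    · rw [hBlast i h]; exact hconnC
  · intro i j hij
    by_cases h : (i : ℕ) < t - 1 <;> by_cases h' : (j : ℕ) < t - 1
    · rw [hBval i h, hBval j h']
      exact hadj _ (hidxF i h) _ (hidxF j h') (hidxinj i h j h' hij)
    · rw [hBval i h, hBlast j h']; exact hadjC _ (hidxF i h)
    · rw [hBlast i h, hBval j h']; exact (hadjC _ (hidxF j h')).symm
    · exact absurd (hlast_eq i j h h') hij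


def SU (L : ℕ → Set V) (a b : ℕ) : Set V := ⋃ j ∈ Set.Ico a b, L j

lemma mem_SU {L : ℕ → Set V} {a b : ℕ} {v : V} :
    v ∈ SU L a b ↔ ∃ j, a ≤ j ∧ j < b ∧ v ∈ L j := by
  simp [SU, Set.mem_Ico, and_assoc]

lemma SU_self {L : ℕ → Set V} {n : ℕ} : SU L n n = ∅ := by
  simp [SU]

lemma SU_update_split {L : ℕ → Set V} {P : Set V} {i n : ℕ} (hi : i ≤ n) :
    SU (Function.update L n P) i (n + 1) = SU L i n ∪ P := by
  ext v
  simp only [mem_SU, Set.mem_union]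
  constructor
  · rintro ⟨j, h1, h2, hv⟩
    by_cases hj : j = n
    · subst hj; rw [Function.update_self] at hv; exact Or.inr hv
    · rw [Function.update_of_ne hj] at hv; exact Or.inl ⟨j, h1, by omega, hv⟩
  · rintro (⟨j, h1, h2, hv⟩ | hv)
    · exact ⟨j, h1, by omega, by rw [Function.update_of_ne (by omega)]; exact hv⟩
    · exact ⟨n, hi, by omega, by rw [Function.update_self]; exact hv⟩

/-- The main invariant of the iterative construction. -/
structure Inv (G : SimpleGraph V) (t n : ℕ) (L : ℕ → Set V) (R : Set V) : Prop where
  ne : ∀ j, j < n → (L j).Nonempty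
  dis : ∀ i j, i < n → j < n → i ≠ j → Disjoint (L i) (L j)
  disR : ∀ j, j < n → Disjoint (L j) R
  cov : ∀ v : V, v ∈ R ∨ ∃ j, j < n ∧ v ∈ L j
  conn : ∀ j, j < n → ConnIn G (L j)
  layer : ∀ i, i < n → ∃ lam : V → ℤ,
    (∀ u v, u ∈ SU L i n ∪ R → v ∈ SU L i n ∪ R → G.Adj u v → |lam u - lam v| ≤ 1) ∧
    (∀ v, v ∉ SU L i n ∪ R → lam v = 0) ∧
    (∀ z : ℤ, ({v | v ∈ L i ∧ lam v = z}).ncard ≤ t - 2)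
  left : ∀ i, i < n →
    ({j | j < i ∧ AdjS G (L j) (L i)}).ncard ≤ t - 2 ∧
    (∀ j1 j2, j1 < i → j2 < i → AdjS G (L j1) (L i) → AdjS G (L j2) (L i) → j1 ≠ j2 →
      AdjS G (L j1) (L j2))
  bdry : ∀ c, c ∈ R →
    ({j | j < n ∧ AdjS G (L j) (Komp G R c)}).ncard ≤ t - 2 ∧
    (∀ j1 j2, j1 < n → j2 < n → AdjS G (L j1) (Komp G R c) → AdjS G (L j2) (Komp G R c) →
      j1 ≠ j2 → AdjS G (L j1) (L j2))

lemma komp_closed_subset {A : Set V} (hc : c ∈ A)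
    (hcl : ∀ u v, u ∈ A → v ∈ S → G.Adj u v → v ∈ A) : Komp G S c ⊆ A := by
  have key : ∀ {x y : V}, (restrictSet G S).Walk x y → x ∈ A → y ∈ A := by
    intro x y w
    induction w with
    | nil => exact id
    | cons h _ ih => exact fun hx => ih (hcl _ _ hx h.2.2 h.1)
  intro y hy
  obtain ⟨w⟩ := hy
  exact key w hc



variable {V : Type*}

lemma step {G : SimpleGraph V} {t n : ℕ} {L : ℕ → Set V} {R : Set V}
    (ht : 3 ≤ t) (hminor : ¬ HasCliqueMinor G t) (inv : Inv G t n L R)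
    {c0 : V} (hc0 : c0 ∈ R) :
    ∃ P : Set V, c0 ∈ P ∧ P ⊆ R ∧ Inv G t (n + 1) (Function.update L n P) (R \ P) := by
  classical
  set C : Set V := Komp G R c0 with hCdef
  have hCR : C ⊆ R := komp_subset hc0
  have hc0C : c0 ∈ C := self_mem_komp
  set H : SimpleGraph V := restrictSet G C with hHdef
  have hconnC : ConnIn G C := komp_conn hc0
  have hreach : ∀ v ∈ C, H.Reachable c0 v := fun v hv => hconnC c0 hc0C v hv
  have hCclosed : ∀ u v : V, u ∈ C → v ∈ R → G.Adj u v → v ∈ C :=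
    fun u v hu hv h => komp_closed hc0 hu hv h
  have hmemC_of_reach : ∀ v, H.Reachable c0 v → v ∈ C := fun v h => mem_of_reach h hc0C
  have hdist0 : ∀ v, v ∉ C → H.dist c0 v = 0 := by
    intro v hv
    exact SimpleGraph.dist_eq_zero_iff_eq_or_not_reachable.mpr
      (Or.inr fun h => hv (hmemC_of_reach v h))
  set QI : Set ℕ := {j | j < n ∧ AdjS G (L j) (Komp G R c0)} with hQIdef
  have hQIfin : QI.Finite := (Set.finite_Iio n).subset fun j hj => hj.1
  have hQIcard : QI.ncard ≤ t - 2 := (inv.bdry c0 hc0).1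
  have hQIpair := (inv.bdry c0 hc0).2
  -- attachment vertices
  have hsel : ∀ j, ∃ x, j ∈ QI → (x ∈ C ∧ ∃ u ∈ L j, G.Adj u x) := by
    intro j
    by_cases h : j ∈ QI
    · obtain ⟨u, hu, w, hw, hadj⟩ := h.2
      exact ⟨w, fun _ => ⟨hw, u, hu, hadj⟩⟩
    · exact ⟨c0, fun hj => absurd hj h⟩
  choose xs hxs using hsel
  have hxsC : ∀ j ∈ QI, xs j ∈ C := fun j hj => (hxs j hj).1
  have hxsreach : ∀ j ∈ QI, H.Reachable c0 (xs j) := fun j hj => hreach _ (hxsC j hj)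
  set P : Set V := insert c0 (⋃ j ∈ QI, pSet H c0 (xs j)) with hPdef
  have hc0P : c0 ∈ P := Set.mem_insert _ _
  have hPC : P ⊆ C := by
    intro y hy
    rcases Set.mem_insert_iff.mp hy with rfl | hy
    · exact hc0C
    · simp only [Set.mem_iUnion, exists_prop] at hy
      obtain ⟨j, hj, m, rfl⟩ := hy
      exact hmemC_of_reach _ (iter_spec (hxsreach j hj) m).1
  have hPR : P ⊆ R := hPC.trans hCR
  have hpsub : ∀ j ∈ QI, pSet H c0 (xs j) ⊆ P := by
    intro j hj z hz
    exact Set.mem_insert_iff.mpr (Or.inr (Set.mem_biUnion hj hz))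
  have hxsP : ∀ j ∈ QI, xs j ∈ P := fun j hj => hpsub j hj self_mem_pSet
  have hPadjQ : ∀ j ∈ QI, AdjS G (L j) P := by
    intro j hj
    obtain ⟨u, hu, hadj⟩ := (hxs j hj).2
    exact ⟨u, hu, xs j, hxsP j hj, hadj⟩
  have hconnP : ConnIn G P := by
    have hPreach : ∀ y ∈ P, (restrictSet G P).Reachable y c0 := by
      intro y hy
      rcases Set.mem_insert_iff.mp hy with rfl | hy
      · exact Reachable.refl _
      · simp only [Set.mem_iUnion, exists_prop] at hy
        obtain ⟨j, hj, m, rfl⟩ := hy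
        exact pSet_reach_root (G := G) (H := H) (fun u v h => h.1) (hpsub j hj) (hxsreach j hj) m
    exact fun a ha b hb => (hPreach a ha).trans (hPreach b hb).symm
  have hL'lt : ∀ j, j < n → Function.update L n P j = L j :=
    fun j hj => Function.update_of_ne (by omega) _ _
  have hL'n : Function.update L n P n = P := Function.update_self _ _ _
  -- new invariant fields as separate facts
  have hne' : ∀ j, j < n + 1 → (Function.update L n P j).Nonempty := by
    intro j hj
    by_cases h : j < n
    · rw [hL'lt j h]; exact inv.ne j h
    · have : j = n := by omega
      subst this; rw [hL'n]; exact ⟨c0, hc0P⟩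
  have hdis' : ∀ i j, i < n + 1 → j < n + 1 → i ≠ j → Disjoint (Function.update L n P i) (Function.update L n P j) := by
    intro i j hi hj hij
    by_cases h : i < n <;> by_cases h' : j < n
    · rw [hL'lt i h, hL'lt j h']; exact inv.dis i j h h' hij
    · have : j = n := by omega
      subst this; rw [hL'lt i h, hL'n]
      exact Set.disjoint_of_subset_right hPR (inv.disR i h)
    · have : i = n := by omega
      subst this; rw [hL'lt j h', hL'n]
      exact (Set.disjoint_of_subset_right hPR (inv.disR j h')).symm
    · exact absurd (by omega : i = j) hij
  have hdisR' : ∀ j, j < n + 1 → Disjoint (Function.update L n P j) (R \ P) := by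
    intro j hj
    by_cases h : j < n
    · rw [hL'lt j h]
      exact Set.disjoint_of_subset_right Set.diff_subset (inv.disR j h)
    · have : j = n := by omega
      subst this; rw [hL'n]; exact Set.disjoint_sdiff_right
  have hconn' : ∀ j, j < n + 1 → ConnIn G (Function.update L n P j) := by
    intro j hj
    by_cases h : j < n
    · rw [hL'lt j h]; exact inv.conn j h
    · have : j = n := by omega
      subst this; rw [hL'n]; exact hconnP
  refine ⟨P, hc0P, hPR, ?_⟩
  refine ⟨hne', hdis', hdisR', ?_, hconn', ?_, ?_, ?_⟩
  · -- cover
    intro v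
    rcases inv.cov v with hv | ⟨j, hj, hv⟩
    · by_cases hvP : v ∈ P
      · exact Or.inr ⟨n, by omega, by rw [hL'n]; exact hvP⟩
      · exact Or.inl ⟨hv, hvP⟩
    · exact Or.inr ⟨j, by omega, by rw [hL'lt j hj]; exact hv⟩
  · -- layer
    intro i hi
    by_cases hin : i < n
    · obtain ⟨lam, h1, h2, h3⟩ := inv.layer i hin
      have hTeq : SU (Function.update L n P) i (n + 1) ∪ (R \ P) = SU L i n ∪ R := by
        rw [SU_update_split (le_of_lt hin), Set.union_assoc,
          Set.union_diff_cancel hPR]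
      rw [hTeq]
      refine ⟨lam, h1, h2, ?_⟩
      intro z
      rw [Function.update_of_ne (by omega : i ≠ n)]
      exact h3 z
    · have hieq : i = n := by omega
      subst hieq
      have hTeq : SU (Function.update L i P) i (i + 1) ∪ (R \ P) = R := by
        rw [SU_update_split (le_refl i), SU_self, Set.empty_union,
          Set.union_diff_cancel hPR]
      rw [hTeq, Function.update_self]
      refine ⟨fun v => (H.dist c0 v : ℤ), ?_, ?_, ?_⟩
      · intro u v hu hv hadj
        show |(H.dist c0 u : ℤ) - (H.dist c0 v : ℤ)| ≤ 1
        by_cases huC : u ∈ C <;> by_cases hvC : v ∈ C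
        · have h1 : H.dist c0 v ≤ H.dist c0 u + 1 :=
            dist_add_adj (hreach u huC) ⟨hadj, huC, hvC⟩
          have h2 : H.dist c0 u ≤ H.dist c0 v + 1 :=
            dist_add_adj (hreach v hvC) ⟨hadj.symm, hvC, huC⟩
          rw [abs_le]; omega
        · exact absurd (hCclosed u v huC hv hadj) hvC
        · exact absurd (hCclosed v u hvC hu hadj.symm) huC
        · rw [hdist0 u huC, hdist0 v hvC]; simp
      · intro v hv
        show (H.dist c0 v : ℤ) = 0
        rw [hdist0 v fun hvC => hv (hCR hvC)]; simp
      · intro z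
        show ({v | v ∈ P ∧ (H.dist c0 v : ℤ) = z}).ncard ≤ t - 2
        by_cases hz : z ≤ 0
        · have hsub : {v | v ∈ P ∧ (H.dist c0 v : ℤ) = z} ⊆ {c0} := by
            rintro v ⟨hvP, hvz⟩
            have hvC := hPC hvP
            have hd0 : H.dist c0 v = 0 := by omega
            exact Set.mem_singleton_iff.mpr
              (((hreach v hvC).dist_eq_zero_iff.mp hd0).symm)
          calc ({v | v ∈ P ∧ (H.dist c0 v : ℤ) = z}).ncard
              ≤ ({c0} : Set V).ncard := Set.ncard_le_ncard hsub (Set.finite_singleton _)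
            _ = 1 := Set.ncard_singleton _
            _ ≤ t - 2 := by omega
        · push_neg at hz
          set s : Set V := {v | v ∈ P ∧ (H.dist c0 v : ℤ) = z} with hsdef
          have hmem : ∀ v ∈ s, ∃ j, j ∈ QI ∧ v ∈ pSet H c0 (xs j) := by
            rintro v ⟨hvP, hvz⟩
            rcases Set.mem_insert_iff.mp hvP with rfl | hv
            · exfalso
              rw [SimpleGraph.dist_self] at hvz
              omega
            · simp only [Set.mem_iUnion, exists_prop] at hv
              exact hv
          set F : V → ℕ := fun v =>
            if h : ∃ j, j ∈ QI ∧ v ∈ pSet H c0 (xs j) then h.choose else 0 with hFdef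
          have hF1 : ∀ v ∈ s, F v ∈ QI ∧ v ∈ pSet H c0 (xs (F v)) := by
            intro v hv
            have h := hmem v hv
            simp only [hFdef, dif_pos h]
            exact h.choose_spec
          have hinj : Set.InjOn F s := by
            intro v hv v' hv' heq
            obtain ⟨hj, hp⟩ := hF1 v hv
            obtain ⟨hj', hp'⟩ := hF1 v' hv'
            rw [heq] at hp
            set j := F v' with hjdef
            have hdv : H.dist c0 v = H.dist c0 v' := by
              have e1 := hv.2; have e2 := hv'.2
              omega
            obtain ⟨a, ha, hva, hda⟩ := pSet_canonical (hxsreach j hj') hp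
            obtain ⟨a', ha', hva', hda'⟩ := pSet_canonical (hxsreach j hj') hp'
            have : a = a' := by omega
            rw [hva, hva', this]
          calc s.ncard ≤ QI.ncard :=
              Set.ncard_le_ncard_of_injOn F (fun v hv => (hF1 v hv).1) hinj hQIfin
            _ ≤ t - 2 := hQIcard
  · -- left
    intro i hi
    by_cases hin : i < n
    · have hseteq : {j | j < i ∧ AdjS G (Function.update L n P j) (Function.update L n P i)} = {j | j < i ∧ AdjS G (L j) (L i)} := by
        ext j
        simp only [Set.mem_setOf_eq]
        constructor
        · rintro ⟨hj, ha⟩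
          rw [hL'lt j (by omega), hL'lt i hin] at ha
          exact ⟨hj, ha⟩
        · rintro ⟨hj, ha⟩
          rw [hL'lt j (by omega), hL'lt i hin]
          exact ⟨hj, ha⟩
      constructor
      · rw [hseteq]; exact (inv.left i hin).1
      · intro j1 j2 hj1 hj2 ha1 ha2 hne12
        rw [hL'lt j1 (by omega), hL'lt i hin] at ha1
        rw [hL'lt j2 (by omega), hL'lt i hin] at ha2
        rw [hL'lt j1 (by omega), hL'lt j2 (by omega)]
        exact (inv.left i hin).2 j1 j2 hj1 hj2 ha1 ha2 hne12
    · have hieq : i = n := by omega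
      subst hieq
      have hsub : {j | j < i ∧ AdjS G (Function.update L i P j) (Function.update L i P i)} ⊆ QI := by
        rintro j ⟨hj, ha⟩
        rw [hL'lt j hj, hL'n] at ha
        exact ⟨hj, ha.mono hPC⟩
      constructor
      · exact le_trans (Set.ncard_le_ncard hsub hQIfin) hQIcard
      · intro j1 j2 hj1 hj2 ha1 ha2 hne12
        rw [hL'lt j1 hj1, hL'n] at ha1
        rw [hL'lt j2 hj2, hL'n] at ha2
        rw [hL'lt j1 hj1, hL'lt j2 hj2]
        exact hQIpair j1 j2 hj1 hj2 (ha1.mono hPC) (ha2.mono hPC) hne12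
  · -- bdry
    intro c' hc'
    set C' : Set V := Komp G (R \ P) c' with hC'def
    have hc'R : c' ∈ R := hc'.1
    by_cases hcC : c' ∈ C
    · -- new component inside C
      have hC'subRP : C' ⊆ R \ P := komp_subset hc'
      have hC'subC : C' ⊆ C := by
        apply komp_closed_subset hcC
        intro u v hu hv hadj
        exact hCclosed u v hu hv.1 hadj
      have hpairs : ∀ j1 j2, j1 < n + 1 → j2 < n + 1 → AdjS G (Function.update L n P j1) C' →
          AdjS G (Function.update L n P j2) C' → j1 ≠ j2 → AdjS G (Function.update L n P j1) (Function.update L n P j2) := by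
        intro j1 j2 hj1 hj2 ha1 ha2 hne12
        by_cases h1 : j1 < n <;> by_cases h2 : j2 < n
        · rw [hL'lt j1 h1] at ha1 ⊢
          rw [hL'lt j2 h2] at ha2 ⊢
          exact hQIpair j1 j2 h1 h2 (ha1.mono hC'subC) (ha2.mono hC'subC) hne12
        · have : j2 = n := by omega
          subst this
          rw [hL'lt j1 h1] at ha1 ⊢
          rw [hL'n]
          exact hPadjQ j1 ⟨h1, ha1.mono hC'subC⟩
        · have : j1 = n := by omega
          subst this
          rw [hL'lt j2 h2] at ha2 ⊢
          rw [hL'n]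
          exact (hPadjQ j2 ⟨h2, ha2.mono hC'subC⟩).symm
        · exact absurd (by omega : j1 = j2) hne12
      constructor
      · -- cardinality via minor-freeness
        by_contra hbig
        push_neg at hbig
        have hfinT : ({j | j < n + 1 ∧ AdjS G (Function.update L n P j) C'}).Finite :=
          (Set.finite_Iio (n + 1)).subset fun j hj => hj.1
        have hge : t - 1 ≤ ({j | j < n + 1 ∧ AdjS G (Function.update L n P j) C'}).ncard := by omega
        obtain ⟨Fs, hFsub, hFcard⟩ := Set.exists_subset_card_eq hge
        apply hminor
        refine build_minor (L := Function.update L n P) ht (hfinT.subset hFsub) hFcard ?_ ⟨c', self_mem_komp⟩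
          ?_ ?_ ?_ (komp_conn hc') ?_ ?_
        · exact fun j hj => hne' j (hFsub hj).1
        · exact fun i hi j hj hij => hdis' i j (hFsub hi).1 (hFsub hj).1 hij
        · intro j hj
          exact Set.disjoint_of_subset_right hC'subRP
            (hdisR' j (hFsub hj).1)
        · exact fun j hj => hconn' j (hFsub hj).1
        · exact fun i hi j hj hij =>
            hpairs i j (hFsub hi).1 (hFsub hj).1 (hFsub hi).2 (hFsub hj).2 hij
        · exact fun j hj => (hFsub hj).2
      · exact hpairs
    · -- old component, untouched
      set D : Set V := Komp G R c' with hDdef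
      have hDC : ∀ y ∈ D, y ∉ C := by
        intro y hy hyC
        exact hcC (Reachable.trans hyC hy.symm)
      have hDsub : D ⊆ R \ P := by
        intro y hy
        exact ⟨komp_subset hc'R hy, fun hyP => hDC y hy (hPC hyP)⟩
      have hC'D : C' = D := by
        apply Set.Subset.antisymm
        · exact komp_mono Set.diff_subset
        · exact komp_shrink hc'R hDsub
      have hPnadj : ¬ AdjS G P C' := by
        rintro ⟨u, hu, w, hw, hadj⟩
        rw [hC'D] at hw
        exact hDC w hw (hCclosed u w (hPC hu) (komp_subset hc'R hw) hadj)
      have hseteq : {j | j < n + 1 ∧ AdjS G (Function.update L n P j) C'} =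
          {j | j < n ∧ AdjS G (L j) (Komp G R c')} := by
        ext j
        simp only [Set.mem_setOf_eq]
        constructor
        · rintro ⟨hj, ha⟩
          by_cases h : j < n
          · rw [hL'lt j h, hC'D] at ha
            exact ⟨h, ha⟩
          · exfalso
            have : j = n := by omega
            subst this
            rw [hL'n] at ha
            exact hPnadj ha
        · rintro ⟨hj, ha⟩
          refine ⟨by omega, ?_⟩
          rw [hL'lt j hj, hC'D]
          exact ha
      constructor
      · rw [hseteq]; exact (inv.bdry c' hc'R).1
      · intro j1 j2 hj1 hj2 ha1 ha2 hne12
        have h1 : j1 < n := by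
          by_contra h
          have : j1 = n := by omega
          subst this
          rw [hL'n] at ha1
          exact hPnadj ha1
        have h2 : j2 < n := by
          by_contra h
          have : j2 = n := by omega
          subst this
          rw [hL'n] at ha2
          exact hPnadj ha2
        rw [hL'lt j1 h1] at ha1 ⊢
        rw [hL'lt j2 h2] at ha2 ⊢
        rw [hC'D] at ha1 ha2
        exact (inv.bdry c' hc'R).2 j1 j2 h1 h2 ha1 ha2 hne12

lemma inv_init (G : SimpleGraph V) (t : ℕ) : Inv G t 0 (fun _ => (∅ : Set V)) Set.univ := by
  refine ⟨?_, ?_, ?_, ?_, ?_, ?_, ?_, ?_⟩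
  · intro j hj; omega
  · intro i j hi; omega
  · intro j hj; omega
  · exact fun v => Or.inl (Set.mem_univ v)
  · intro j hj; omega
  · intro i hi; omega
  · intro i hi; omega
  · intro c _
    constructor
    · have : {j | j < 0 ∧ AdjS G ((fun _ => (∅ : Set V)) j) (Komp G Set.univ c)} = ∅ := by
        ext j; simp
      rw [this]
      simp
    · intro j1 j2 hj1; omega

lemma iterate [Fintype V] {G : SimpleGraph V} {t : ℕ} (ht : 3 ≤ t)
    (hminor : ¬ HasCliqueMinor G t) :
    ∀ (N n : ℕ) (L : ℕ → Set V) (R : Set V), R.ncard ≤ N → Inv G t n L R →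
      ∃ (n' : ℕ) (L' : ℕ → Set V), Inv G t n' L' (∅ : Set V) := by
  intro N
  induction N with
  | zero =>
      intro n L R hR inv
      have hRe : R = ∅ := by
        rw [← Set.ncard_eq_zero (Set.toFinite R)]
        omega
      subst hRe
      exact ⟨n, L, inv⟩
  | succ N ih =>
      intro n L R hR inv
      rcases Set.eq_empty_or_nonempty R with rfl | ⟨c0, hc0⟩
      · exact ⟨n, L, inv⟩
      · obtain ⟨P, hc0P, hPR, inv'⟩ := step ht hminor inv hc0
        refine ih (n + 1) _ _ ?_ inv'
        have hss : R \ P ⊂ R :=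
          (Set.ssubset_iff_of_subset Set.diff_subset).mpr
            ⟨c0, hc0, fun h => h.2 hc0P⟩
        have := Set.ncard_lt_ncard hss (Set.toFinite R)
        omega

end Stmt8

set_option maxHeartbeats 1000000 in
open Stmt8 in
/-- For every `k ≥ 3`, every finite `K_k`-minor-free simple graph admits a linear order
on its vertices such that the resulting ordered graph belongs to `T_{k−2}^{(k−2)}`. -/
theorem stmt_8 (k : ℕ) (hk : 3 ≤ k) (V : Type) [Fintype V] (G : SimpleGraph V)
    (hG : ¬ HasCliqueMinor G k) :
    ∃ _ord : LinearOrder V,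
      ({ V := V, graph := G } : OrderedGraph) ∈ Cpow (Tclass (k - 2)) (k - 2) := by
  classical
  obtain ⟨n, L, inv⟩ :=
    iterate hk hG (Set.univ : Set V).ncard 0 (fun _ => (∅ : Set V)) Set.univ le_rfl
      (inv_init G k)
  -- index of the part containing a vertex
  have hex : ∀ v : V, ∃ j, j < n ∧ v ∈ L j := by
    intro v
    rcases inv.cov v with h | h
    · exact absurd h (Set.notMem_empty v)
    · exact h
  set idx : V → ℕ := fun v => (hex v).choose with hidxdef
  have hidx : ∀ v, idx v < n ∧ v ∈ L (idx v) := fun v => (hex v).choose_spec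
  have hidx_eq : ∀ v j, j < n → v ∈ L j → idx v = j := by
    intro v j hj hv
    by_contra hne
    exact Set.disjoint_left.mp (inv.dis _ _ (hidx v).1 hj hne) (hidx v).2 hv
  set enum := Fintype.equivFin V with henumdef
  set f : V → ℕ ×ₗ ℕ := fun v => toLex (idx v, (enum v : ℕ)) with hfdef
  have hfinj : Function.Injective f := by
    intro a b hab
    have h0 := toLex.injective hab
    have h2 : ((enum a : Fin (Fintype.card V)) : ℕ) = ((enum b : Fin (Fintype.card V)) : ℕ) :=
      congrArg Prod.snd h0
    exact enum.injective (Fin.ext h2)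
  letI ord : LinearOrder V := LinearOrder.lift' f hfinj
  have hlt : ∀ a b : V, a < b ↔ f a < f b := fun a b => Iff.rfl
  refine ⟨ord, ?_⟩
  refine ⟨n, fun i : Fin n => L i, ?_, ?_, ?_, ?_, ?_, ?_⟩
  · exact fun i => inv.ne i i.isLt
  · exact fun i j hij => inv.dis i j i.isLt j.isLt fun h => hij (Fin.ext h)
  · exact Set.eq_univ_iff_forall.mpr fun v =>
      Set.mem_iUnion.mpr ⟨⟨idx v, (hidx v).1⟩, (hidx v).2⟩
  · intro i j hij u hu v hv
    rw [hlt]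
    rw [hfdef]
    refine (Prod.Lex.lt_iff).mpr (Or.inl ?_)
    have h1 : idx u = (i : ℕ) := hidx_eq u i i.isLt hu
    have h2 : idx v = (j : ℕ) := hidx_eq v j j.isLt hv
    simpa [h1, h2] using hij
  · intro i
    obtain ⟨lam, h1, h2, h3⟩ := inv.layer i i.isLt
    have hU : (⋃ j ∈ Set.Ici i, (fun i : Fin n => L i) j) = SU L i n ∪ (∅ : Set V) := by
      ext v
      simp only [Set.mem_iUnion, Set.mem_union, Set.mem_Ici, mem_SU, exists_prop,
        Set.mem_empty_iff_false, or_false]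
      constructor
      · rintro ⟨j, hij, hv⟩
        exact ⟨j, hij, j.isLt, hv⟩
      · rintro ⟨j, hij, hjn, hv⟩
        exact ⟨⟨j, hjn⟩, hij, hv⟩
    refine ⟨lam, ?_, ?_, fun z => h3 z⟩
    · intro x hx y hy hadj
      have hxm : x ∈ SU L i n ∪ (∅ : Set V) :=
        Or.inl (mem_SU.mpr ⟨i, le_refl _, i.isLt, hx⟩)
      have hym : y ∈ SU L i n ∪ (∅ : Set V) :=
        Or.inl (mem_SU.mpr ⟨i, le_refl _, i.isLt, hy⟩)
      exact h1 x y hxm hym hadj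
    · intro x hx y hy hr
      have hlip : ∀ u v, (restrictSet G (⋃ j ∈ Set.Ici i, (fun i : Fin n => L i) j)).Adj u v →
          |lam u - lam v| ≤ 1 := by
        intro u v h
        exact h1 u v (hU ▸ h.2.1) (hU ▸ h.2.2) h.1
      exact lipschitz_dist hlip hr
  · constructor
    · intro v u w hvu hvw huv hwv hneuw
      obtain ⟨hne1, ha1⟩ := hvu
      obtain ⟨hne2, ha2⟩ := hvw
      refine ⟨hneuw, ?_⟩
      exact (inv.left (Fin.val v) (Fin.isLt v)).2 (Fin.val u) (Fin.val w) huv hwv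
        (AdjS.symm ha1) (AdjS.symm ha2) fun h => hneuw (Fin.ext h)
    · intro v
      refine le_trans (Set.ncard_le_ncard_of_injOn (fun u : Fin n => (u : ℕ)) ?_ ?_ ?_)
        (inv.left (Fin.val v) (Fin.isLt v)).1
      · rintro u ⟨hadj, hult⟩
        exact ⟨hult, AdjS.symm hadj.2⟩
      · exact fun a _ b _ h => Fin.ext h
      · exact (Set.finite_Iio (Fin.val v)).subset fun j hj => hj.1
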